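/- Let E₁ and E₂ be directed graphs with free path groupoids G₁ = G(E₁) and G₂ = G(E₂), and let h : Arr(G₁) → Arr(G₂) be a groupoid homomorphism whose restriction to W₁ := W(E₁) is injective and which satisfies h(W₁) = W₂ := W(E₂). Then h : Arr(G₁) → Arr(G₂) is bijective. -/

import Mathlib

open CategoryTheory

universe u v u' v'

/-- The set of arrows of a groupoid. -/
abbrev Arr (C : Type u) [Groupoid.{v} C] : Type (max u v) := Σ (x y : C), x ⟶ y

/-- Two arrows `g₁ : x ⟶ y` and `g₂ : z ⟶ w` are composable if `y = z`. -/
def Arr.Composable {C : Type u} [Groupoid.{v} C] (g₁ g₂ : Arr C) : Prop := g₁.2.1 = g₂.1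

/-- Composition of composable arrows. -/
def Arr.comp {C : Type u} [Groupoid.{v} C] (g₁ g₂ : Arr C) (h : g₁.Composable g₂) : Arr C :=
  ⟨g₁.1, g₂.2.1, g₁.2.2 ≫ eqToHom h ≫ g₂.2.2⟩

/-- The identity arrow at an object. -/
def idArr {C : Type u} [Groupoid.{v} C] (x : C) : Arr C := ⟨x, x, 𝟙 x⟩

/-- Inverse of an arrow. -/
def Arr.inv {C : Type u} [Groupoid.{v} C] (g : Arr C) : Arr C :=
  ⟨g.2.1, g.1, Groupoid.inv g.2.2⟩

/-- A groupoid homomorphism, as a map on arrows preserving composability and composition. -/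
def IsGroupoidHom {C : Type u} {D : Type u'} [Groupoid.{v} C] [Groupoid.{v'} D]
    (h : Arr C → Arr D) : Prop :=
  ∀ g₁ g₂ : Arr C, ∀ hc : g₁.Composable g₂,
    ∃ hc' : (h g₁).Composable (h g₂), h (g₁.comp g₂ hc) = (h g₁).comp (h g₂) hc'

/-- The arrow of the free groupoid associated to a path in the quiver `V`;
this is the image of `p` under the canonical functor `Paths V ⥤ Quiver.FreeGroupoid V`
extending the inclusion of `V`. -/
def pathArrow (V : Type u) [Quiver.{v + 1} V] {x y : V} (p : Quiver.Path x y) :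
    Arr (Quiver.FreeGroupoid V) :=
  ⟨(Quiver.FreeGroupoid.of V).obj x, (Quiver.FreeGroupoid.of V).obj y,
    composePath ((Quiver.FreeGroupoid.of V).mapPath p)⟩

/-- The set `W(E)` of arrows of `Quiver.FreeGroupoid V` that are images of finite paths of `V`. -/
def WSet (V : Type u) [Quiver.{v + 1} V] : Set (Arr (Quiver.FreeGroupoid V)) :=
  {a | ∃ (x y : V) (p : Quiver.Path x y), a = pathArrow V p}


section Aux

variable {C : Type u} {D : Type u'} [Groupoid.{v} C] [Groupoid.{v'} D]

theorem arr_eq_iff {x y : C} (f g : x ⟶ y) :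
    (⟨x, y, f⟩ : Arr C) = ⟨x, y, g⟩ ↔ f = g := by
  constructor
  · intro h
    simpa using h
  · rintro rfl; rfl

theorem arr_ext {a b : Arr C} (h1 : a.1 = b.1) (h2 : a.2.1 = b.2.1)
    (h3 : a.2.2 = eqToHom h1 ≫ b.2.2 ≫ eqToHom h2.symm) : a = b := by
  obtain ⟨x, y, f⟩ := a
  obtain ⟨x', y', g⟩ := b
  dsimp at h1 h2
  subst h1; subst h2
  simpa using h3

theorem Arr.comp_congr {a a' b b' : Arr C} (ha : a = a') (hb : b = b') (hc : a.Composable b) :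
    a.comp b hc = a'.comp b' (ha ▸ hb ▸ hc) := by
  subst ha; subst hb; rfl

theorem comp_id_right (a : Arr C) : a.comp (idArr a.2.1) rfl = a := by
  obtain ⟨x, y, f⟩ := a
  simp [Arr.comp, idArr]

theorem comp_inv_self (a : Arr C) : a.comp a.inv rfl = idArr a.1 := by
  obtain ⟨x, y, f⟩ := a
  simp [Arr.comp, Arr.inv, idArr]

theorem id_comp_self (x : C) : (idArr x).comp (idArr x) rfl = idArr x := by
  simp [Arr.comp, idArr]

theorem comp_left_cancel {a b c : Arr C} (hc1 : a.Composable b) (hc2 : a.Composable c)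
    (h : a.comp b hc1 = a.comp c hc2) : b = c := by
  obtain ⟨x, y, f⟩ := a
  obtain ⟨yb, zb, g⟩ := b
  obtain ⟨yc, zc, k⟩ := c
  have hb : y = yb := hc1
  have hcc : y = yc := hc2
  subst hb; subst hcc
  simp only [Arr.comp, eqToHom_refl, Category.id_comp] at h
  have h1 : zb = zc := congrArg (fun a => a.2.1) h
  subst h1
  rw [arr_eq_iff] at h
  rw [cancel_epi f] at h
  rw [show eqToHom hc1 = 𝟙 y from rfl, Category.id_comp,
    Category.id_comp] at h
  rw [h]


def mapArr (F : C ⥤ D) (g : Arr C) : Arr D := ⟨F.obj g.1, F.obj g.2.1, F.map g.2.2⟩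

theorem mapArr_id (F : C ⥤ D) (z : C) : mapArr F (idArr z) = idArr (F.obj z) := by
  refine arr_ext rfl rfl ?_
  simp [mapArr, idArr]
  rfl

theorem mapArr_comp (F : C ⥤ D) (a b : Arr C) (hc : a.Composable b) :
    mapArr F (a.comp b hc) = (mapArr F a).comp (mapArr F b) (congrArg F.obj hc) := by
  refine arr_ext rfl rfl ?_
  simp [mapArr, Arr.comp, eqToHom_map]
  rw [show F.map (eqToHom hc) = eqToHom (congrArg F.obj hc) from eqToHom_map F hc]
  exact (Category.id_comp _).symm

theorem mapArr_inv (F : C ⥤ D) (a : Arr C) : mapArr F a.inv = (mapArr F a).inv := by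
  refine arr_ext rfl rfl ?_
  simp [mapArr, Arr.inv, Groupoid.inv_eq_inv]
  rfl

variable {h : Arr C → Arr D} (hhom : IsGroupoidHom h)


include hhom

theorem h_id (x : C) : h (idArr x) = idArr ((h (idArr x)).1) := by
  obtain ⟨hc', he⟩ := hhom (idArr x) (idArr x) rfl
  rw [id_comp_self] at he
  have : h (idArr x) = idArr ((h (idArr x)).2.1) := by
    refine comp_left_cancel (a := h (idArr x)) hc' rfl ?_
    rw [← he, comp_id_right]
  rw [this]
  rfl

theorem h_src (g : Arr C) : (h g).1 = (h (idArr g.1)).1 := by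
  obtain ⟨hc', _⟩ := hhom (idArr g.1) g rfl
  rw [h_id hhom] at hc'
  exact hc'.symm

theorem h_tgt (g : Arr C) : (h g).2.1 = (h (idArr g.2.1)).1 := by
  obtain ⟨hc', _⟩ := hhom g (idArr g.2.1) rfl
  exact hc'

theorem h_inv (g : Arr C) : h g.inv = (h g).inv := by
  obtain ⟨hc', he⟩ := hhom g g.inv rfl
  rw [comp_inv_self] at he
  refine comp_left_cancel (a := h g) hc' rfl ?_
  rw [← he, comp_inv_self, h_id hhom, ← h_src hhom g]

end Aux

section FreeAux

variable {V : Type u} [Quiver.{v + 1} V]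

theorem of_obj_surjective : Function.Surjective (Quiver.FreeGroupoid.of V).obj :=
  fun z => ⟨z.as, rfl⟩

theorem of_obj_injective : Function.Injective (Quiver.FreeGroupoid.of V).obj :=
  fun _ _ e => congrArg (CategoryTheory.Quotient.as (C := Paths (Quiver.Symmetrify V))
    (r := Quiver.FreeGroupoid.redStep)) e

theorem pathArrow_nil (x : V) :
    pathArrow V (Quiver.Path.nil (a := x)) = idArr ((Quiver.FreeGroupoid.of V).obj x) := rfl

theorem idArr_mem_WSet (z : Quiver.FreeGroupoid V) : idArr z ∈ WSet V := by
  obtain ⟨x, rfl⟩ := of_obj_surjective (V := V) z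
  exact ⟨x, x, Quiver.Path.nil, rfl⟩

theorem pathArrow_comp {x y z : V} (p : Quiver.Path x y) (q : Quiver.Path y z)
    (hc : (pathArrow V p).Composable (pathArrow V q)) :
    (pathArrow V p).comp (pathArrow V q) hc = pathArrow V (p.comp q) := by
  refine arr_ext rfl rfl ?_
  simp only [pathArrow, Arr.comp]
  rw [Prefunctor.mapPath_comp, composePath_comp]
  simp
  exact (Category.id_comp _).symm

theorem WSet.comp_mem {a b : Arr (Quiver.FreeGroupoid V)} (ha : a ∈ WSet V) (hb : b ∈ WSet V)
    (hc : a.Composable b) : a.comp b hc ∈ WSet V := by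
  obtain ⟨x, y, p, rfl⟩ := ha
  obtain ⟨x', y', q, rfl⟩ := hb
  have : y = x' := of_obj_injective hc
  subst this
  exact ⟨x, y', p.comp q, pathArrow_comp p q hc⟩

theorem pathArrow_cons {x y z : V} (p : Quiver.Path x y) (e : y ⟶ z) :
    pathArrow V (p.cons e) = (pathArrow V p).comp (pathArrow V e.toPath) rfl := by
  rw [pathArrow_comp p e.toPath rfl]
  rfl

theorem arr_induction_aux (P : Arr (Quiver.FreeGroupoid V) → Prop)
    (hW : ∀ a ∈ WSet V, P a)
    (hcomp : ∀ a b, ∀ hc : a.Composable b, P a → P b → P (a.comp b hc))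
    (hinv : ∀ a, P a → P a.inv) (x : Quiver.Symmetrify V) :
    ∀ (y : Quiver.Symmetrify V) (pth : Quiver.Path x y),
      P ⟨⟨x⟩, ⟨y⟩, Quot.mk _ pth⟩ := by
  intro y pth
  induction pth with
  | nil => exact hW _ (idArr_mem_WSet _)
  | @cons b y p e ih =>
      have heq : (⟨⟨x⟩, ⟨y⟩, Quot.mk _ (p.cons e)⟩ : Arr (Quiver.FreeGroupoid V)) =
          Arr.comp ⟨⟨x⟩, ⟨b⟩, Quot.mk _ p⟩ ⟨⟨b⟩, ⟨y⟩, Quot.mk _ (Quiver.Hom.toPath e)⟩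
            (by rfl) := rfl
      rw [heq]
      refine hcomp _ _ _ ih ?_
      cases e using Sum.casesOn with
      | inl e' =>
          have h1 : (⟨⟨b⟩, ⟨y⟩, Quot.mk _ (Quiver.Hom.toPath (Sum.inl e'))⟩ :
              Arr (Quiver.FreeGroupoid V)) = pathArrow V (Quiver.Hom.toPath e') := rfl
          rw [h1]
          exact hW _ ⟨b, y, Quiver.Hom.toPath e', rfl⟩
      | inr e' =>
          have h1 : (⟨⟨b⟩, ⟨y⟩, Quot.mk _ (Quiver.Hom.toPath (Sum.inr e'))⟩ :
              Arr (Quiver.FreeGroupoid V)) = (pathArrow V (Quiver.Hom.toPath e')).inv := rfl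
          rw [h1]
          exact hinv _ (hW _ ⟨y, b, Quiver.Hom.toPath e', rfl⟩)

theorem arr_induction (P : Arr (Quiver.FreeGroupoid V) → Prop)
    (hW : ∀ a ∈ WSet V, P a)
    (hcomp : ∀ a b, ∀ hc : a.Composable b, P a → P b → P (a.comp b hc))
    (hinv : ∀ a, P a → P a.inv) : ∀ a, P a := by
  rintro ⟨⟨x⟩, ⟨y⟩, f⟩
  induction f using Quot.ind with
  | mk pth => exact arr_induction_aux P hW hcomp hinv x y pth

theorem pathArrow_toPath {x y : V} (f : x ⟶ y) :
    pathArrow V f.toPath =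
      ⟨(Quiver.FreeGroupoid.of V).obj x, (Quiver.FreeGroupoid.of V).obj y, (Quiver.FreeGroupoid.of V).map f⟩ := by
  refine arr_ext rfl rfl ?_
  simp [pathArrow]
  exact (Category.id_comp _).symm

end FreeAux

/-- A groupoid homomorphism between free path groupoids which is injective on `W(E₁)` and maps
`W(E₁)` onto `W(E₂)` is bijective. -/
theorem groupoidHom_bijective
    (V₁ : Type u) [Quiver.{v + 1} V₁] (V₂ : Type u') [Quiver.{v' + 1} V₂]
    (h : Arr (Quiver.FreeGroupoid V₁) → Arr (Quiver.FreeGroupoid V₂)) (hhom : IsGroupoidHom h)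
    (hinj : Set.InjOn h (WSet V₁)) (himg : h '' WSet V₁ = WSet V₂) :
    Function.Bijective h := by
  classical
  set φ : Quiver.FreeGroupoid V₁ → Quiver.FreeGroupoid V₂ := fun z => (h (idArr z)).1 with hφdef
  have hid : ∀ z, h (idArr z) = idArr (φ z) := fun z => h_id hhom z
  have hsrc : ∀ g, (h g).1 = φ g.1 := fun g => h_src hhom g
  have htgt : ∀ g, (h g).2.1 = φ g.2.1 := fun g => h_tgt hhom g
  have φinj : Function.Injective φ := by
    intro z z' e
    have heq : h (idArr z) = h (idArr z') := by rw [hid, hid, e]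
    exact congrArg Sigma.fst (hinj (idArr_mem_WSet z) (idArr_mem_WSet z') heq)
  have φsurj : Function.Surjective φ := by
    intro w
    have hmem : idArr w ∈ WSet V₂ := idArr_mem_WSet w
    rw [← himg] at hmem
    obtain ⟨a, _, ha⟩ := hmem
    refine ⟨a.1, ?_⟩
    rw [← hsrc a, ha]
    rfl
  set ρ : Quiver.FreeGroupoid V₂ → Quiver.FreeGroupoid V₁ := Function.surjInv φsurj with hρdef
  have hφρ : ∀ w, φ (ρ w) = w := fun w => Function.surjInv_eq φsurj w
  have hρφ : ∀ z, ρ (φ z) = z := fun z => φinj (hφρ (φ z))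
  have key : ∀ (a b : V₂) (f : a ⟶ b),
      ∃ w, w ∈ WSet V₁ ∧ h w = pathArrow V₂ f.toPath := by
    intro a b f
    have hmem : pathArrow V₂ f.toPath ∈ WSet V₂ := ⟨a, b, f.toPath, rfl⟩
    rw [← himg] at hmem
    obtain ⟨w, hw, hw2⟩ := hmem
    exact ⟨w, hw, hw2⟩
  choose wmap hwW hwh using key
  have hw1 : ∀ (a b : V₂) (f : a ⟶ b),
      (wmap a b f).1 = ρ ((Quiver.FreeGroupoid.of V₂).obj a) := by
    intro a b f
    have : φ (wmap a b f).1 = (Quiver.FreeGroupoid.of V₂).obj a := by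
      rw [← hsrc, hwh a b f]
      rfl
    rw [← this, hρφ]
  have hw2 : ∀ (a b : V₂) (f : a ⟶ b),
      (wmap a b f).2.1 = ρ ((Quiver.FreeGroupoid.of V₂).obj b) := by
    intro a b f
    have : φ (wmap a b f).2.1 = (Quiver.FreeGroupoid.of V₂).obj b := by
      rw [← htgt, hwh a b f]
      rfl
    rw [← this, hρφ]
  let ψ : V₂ ⥤q Quiver.FreeGroupoid V₁ :=
    { obj := fun a => ρ ((Quiver.FreeGroupoid.of V₂).obj a)
      map := fun {a b} f =>
        eqToHom (hw1 a b f).symm ≫ (wmap a b f).2.2 ≫ eqToHom (hw2 a b f) }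
  let F : Quiver.FreeGroupoid V₂ ⥤ Quiver.FreeGroupoid V₁ := Quiver.FreeGroupoid.lift ψ
  have hlift : Quiver.FreeGroupoid.of V₂ ⋙q F.toPrefunctor = ψ := Quiver.FreeGroupoid.lift_spec ψ
  have hFobj : ∀ z, F.obj z = ρ z := by
    intro z
    obtain ⟨a, rfl⟩ := of_obj_surjective (V := V₂) z
    exact congrArg (fun Φ : V₂ ⥤q Quiver.FreeGroupoid V₁ => Φ.obj a) hlift
  have harrψ : ∀ (a b : V₂) (f : a ⟶ b),
      (⟨F.obj ((Quiver.FreeGroupoid.of V₂).obj a), F.obj ((Quiver.FreeGroupoid.of V₂).obj b),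
        F.map ((Quiver.FreeGroupoid.of V₂).map f)⟩ : Arr (Quiver.FreeGroupoid V₁)) =
      ⟨ψ.obj a, ψ.obj b, ψ.map f⟩ :=
    fun a b f => congrArg
      (fun Φ : V₂ ⥤q Quiver.FreeGroupoid V₁ => (⟨Φ.obj a, Φ.obj b, Φ.map f⟩ : Arr (Quiver.FreeGroupoid V₁)))
      hlift
  have hFw : ∀ (a b : V₂) (f : a ⟶ b),
      mapArr F (pathArrow V₂ f.toPath) = wmap a b f := by
    intro a b f
    rw [pathArrow_toPath]
    refine (harrψ a b f).trans ?_
    refine arr_ext (hw1 a b f).symm (hw2 a b f).symm ?_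
    rfl
  have L2 : ∀ (x y : V₂) (q : Quiver.Path x y),
      mapArr F (pathArrow V₂ q) ∈ WSet V₁ ∧ h (mapArr F (pathArrow V₂ q)) = pathArrow V₂ q := by
    intro x y q
    induction q with
    | nil =>
        constructor
        · rw [pathArrow_nil, mapArr_id]
          exact idArr_mem_WSet _
        · rw [pathArrow_nil, mapArr_id, hid, hFobj, hφρ]
    | @cons b y q e ih =>
        have hdec : pathArrow V₂ (q.cons e) =
            (pathArrow V₂ q).comp (pathArrow V₂ e.toPath) rfl := pathArrow_cons q e
        have hmac := mapArr_comp F (pathArrow V₂ q) (pathArrow V₂ e.toPath) rfl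
        have hBW : mapArr F (pathArrow V₂ e.toPath) ∈ WSet V₁ := by
          rw [hFw b y e]; exact hwW b y e
        have hBh : h (mapArr F (pathArrow V₂ e.toPath)) = pathArrow V₂ e.toPath := by
          rw [hFw b y e]; exact hwh b y e
        constructor
        · rw [hdec, hmac]
          exact WSet.comp_mem ih.1 hBW _
        · rw [hdec, hmac]
          obtain ⟨hc', hcomp'⟩ := hhom (mapArr F (pathArrow V₂ q))
            (mapArr F (pathArrow V₂ e.toPath)) (congrArg F.obj rfl)
          rw [hcomp', Arr.comp_congr ih.2 hBh]
  have left : ∀ a, mapArr F (h a) = a := by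
    refine arr_induction _ ?_ ?_ ?_
    · rintro a ⟨x, y, p, rfl⟩
      have hmem : h (pathArrow V₁ p) ∈ WSet V₂ := by
        rw [← himg]; exact ⟨pathArrow V₁ p, ⟨x, y, p, rfl⟩, rfl⟩
      obtain ⟨x', y', q, hq⟩ := hmem
      rw [hq]
      refine hinj (L2 x' y' q).1 ⟨x, y, p, rfl⟩ ?_
      rw [(L2 x' y' q).2, ← hq]
    · intro a b hc pa pb
      obtain ⟨hc', he⟩ := hhom a b hc
      rw [he, mapArr_comp]
      exact Arr.comp_congr pa pb _
    · intro a pa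
      rw [h_inv hhom, mapArr_inv, pa]
  have right : ∀ b, h (mapArr F b) = b := by
    refine arr_induction _ ?_ ?_ ?_
    · rintro b ⟨x, y, q, rfl⟩
      exact (L2 x y q).2
    · intro a b hc pa pb
      rw [mapArr_comp]
      obtain ⟨hc', he⟩ := hhom (mapArr F a) (mapArr F b) (congrArg F.obj hc)
      rw [he]
      exact Arr.comp_congr pa pb _
    · intro a pa
      rw [mapArr_inv, h_inv hhom, pa]
  exact ⟨Function.LeftInverse.injective left, Function.RightInverse.surjective right⟩
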